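/- Let (N, K_min, v) be a minimal incomplete game with total excess Δ ≥ 0, and define the complete game v̄ by v̄(S) = v(S) for S ∈ K_min and v̄(S) = v(N) − Σ_{i∈N∖S} v({i}) for S ∉ K_min. Then v̄ is the upper game of the set of 1-convex extensions of v: every 1-convex extension w satisfies w(S) ≤ v̄(S) for all S ⊆ N, and for every S ⊆ N there exists a 1-convex extension w' with w'(S) = v̄(S). -/

import Mathlib

noncomputable section

open Finset

/-- The upper (utopia) vector `b^w` of a cooperative game `w` on `N = {1,…,n}`. -/
def bvec (n : ℕ) (w : Finset (Fin n) → ℝ) (i : Fin n) : ℝ :=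
  w Finset.univ - w (Finset.univ \ {i})

/-- A cooperative game `w` is 1-convex: for every nonempty coalition `S`,
`w S ≤ w N - b^w(N \ S)`, and `b^w(N) ≥ w N`. -/
def OneConvex (n : ℕ) (w : Finset (Fin n) → ℝ) : Prop :=
  (∀ S : Finset (Fin n), S.Nonempty →
      w S ≤ w Finset.univ - ∑ i ∈ Finset.univ \ S, bvec n w i) ∧
  w Finset.univ ≤ ∑ i : Fin n, bvec n w i

/-- The set of 1-convex extensions of an incomplete game `(N, K, v)`:
cooperative games (`w ∅ = 0`) that are 1-convex and agree with `v` on `K`. -/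
def Cext (n : ℕ) (K : Finset (Finset (Fin n))) (v : Finset (Fin n) → ℝ) :
    Set (Finset (Fin n) → ℝ) :=
  {w | w ∅ = 0 ∧ OneConvex n w ∧ ∀ S ∈ K, w S = v S}

/-- `K_min`: the empty coalition, the grand coalition and all singletons. -/
def KminF (n : ℕ) : Finset (Finset (Fin n)) :=
  {∅, Finset.univ} ∪ Finset.univ.image (fun i => ({i} : Finset (Fin n)))

/-- The total excess `Δ = v(N) - ∑_{i ∈ N} v({i})`. -/
def totalExcess (n : ℕ) (v : Finset (Fin n) → ℝ) : ℝ :=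
  v Finset.univ - ∑ i : Fin n, v {i}

/-- A minimal incomplete game (only the values on `K_min` are relevant) that is
1-convex-extendable, i.e. `v ∅ = 0` and `Δ ≥ 0`. -/
def MinExtendable (n : ℕ) (v : Finset (Fin n) → ℝ) : Prop :=
  v ∅ = 0 ∧ 0 ≤ totalExcess n v

/-- The extreme games `v^i` of the set of 1-convex extensions of a minimal
incomplete game. -/
def extGame (n : ℕ) (v : Finset (Fin n) → ℝ) (i : Fin n) (S : Finset (Fin n)) : ℝ :=
  if S ∈ KminF n then v S
  else if i ∈ S then v Finset.univ - ∑ j ∈ Finset.univ \ S, v {j}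
  else v Finset.univ - ∑ j ∈ Finset.univ \ S, v {j} - totalExcess n v

/-- The upper game of the set of 1-convex extensions of a minimal incomplete game. -/
def upperGameMin (n : ℕ) (v : Finset (Fin n) → ℝ) (S : Finset (Fin n)) : ℝ :=
  if S ∈ KminF n then v S else v Finset.univ - ∑ i ∈ Finset.univ \ S, v {i}

/-- The index set `E = 2^N \ ({∅, N} ∪ {{i}} ∪ {N \ {i}})` of extreme rays. -/
def ESetMin (n : ℕ) : Finset (Finset (Fin n)) :=
  Finset.univ \
    (KminF n ∪ Finset.univ.image (fun i => Finset.univ \ ({i} : Finset (Fin n))))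

/-- The extreme-ray game `e_T`: value `-1` on `T` and `0` elsewhere. -/
def eRay (n : ℕ) (T S : Finset (Fin n)) : ℝ := if S = T then -1 else 0

/-- The centre of gravity `ṽ = (1/n) ∑_i v^i` of the extreme games. -/
def tildeV (n : ℕ) (v : Finset (Fin n) → ℝ) (S : Finset (Fin n)) : ℝ :=
  (∑ i : Fin n, extGame n v i S) / (n : ℝ)

/-- The centre of gravity `ẽ = (1/|E|) ∑_{T ∈ E} e_T` of the extreme rays
(minimal incomplete case). -/
def tildeEMin (n : ℕ) (S : Finset (Fin n)) : ℝ :=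
  (∑ T ∈ ESetMin n, eRay n T S) / ((ESetMin n).card : ℝ)

/-- The gap function `g^w(S) = b^w(S) - w(S)`. -/
def gapF (n : ℕ) (w : Finset (Fin n) → ℝ) (S : Finset (Fin n)) : ℝ :=
  (∑ i ∈ S, bvec n w i) - w S

/-- The τ-value of a 1-convex game: `τ_i(w) = b^w_i - g^w(N)/n`. -/
def tauVal (n : ℕ) (w : Finset (Fin n) → ℝ) (i : Fin n) : ℝ :=
  bvec n w i - gapF n w Finset.univ / (n : ℝ)

/-- The Shapley value. -/
def shapley (n : ℕ) (w : Finset (Fin n) → ℝ) (i : Fin n) : ℝ :=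
  ∑ S ∈ Finset.univ.filter (fun S : Finset (Fin n) => i ∈ S),
    ((Nat.factorial (S.card - 1) * Nat.factorial (n - S.card) : ℕ) : ℝ) /
        (Nat.factorial n : ℝ) * (w S - w (S \ {i}))

/-- The concession vector `λ^w_i = min_{S ∋ i} g^w(S)`. -/
def concession (n : ℕ) (w : Finset (Fin n) → ℝ) (i : Fin n) : ℝ :=
  (Finset.univ.filter (fun S : Finset (Fin n) => i ∈ S)).inf'
    ⟨{i}, by simp⟩ (gapF n w)

/-- The minimal right vector `a^w = b^w - λ^w`. -/
def minRight (n : ℕ) (w : Finset (Fin n) → ℝ) (i : Fin n) : ℝ :=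
  bvec n w i - concession n w i

/-- The average value `ζ̃_i(v) = v({i}) + Δ/n` of a minimal incomplete game. -/
def avgValue (n : ℕ) (v : Finset (Fin n) → ℝ) (i : Fin n) : ℝ :=
  v {i} + totalExcess n v / (n : ℝ)

/-- The zero-normalised game of a minimal incomplete game: value `Δ` on the
grand coalition and `0` on all other coalitions. -/
def zeroNorm (n : ℕ) (v : Finset (Fin n) → ℝ) (S : Finset (Fin n)) : ℝ :=
  if S = Finset.univ then totalExcess n v else 0

/-- The upper game `v̄` for incomplete games with defined upper vector. -/
def upperGameK (n : ℕ) (K : Finset (Finset (Fin n))) (v : Finset (Fin n) → ℝ)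
    (S : Finset (Fin n)) : ℝ :=
  if S ∈ K then v S else v Finset.univ - ∑ i ∈ Finset.univ \ S, bvec n v i

/-- The centre of gravity `ẽ = (1/|E|) ∑_{T ∉ K} e_T` of the extreme rays
(defined upper vector case), where `E = 2^N \ K`. -/
def tildeEK (n : ℕ) (K : Finset (Finset (Fin n))) (S : Finset (Fin n)) : ℝ :=
  (∑ T ∈ Finset.univ \ K, eRay n T S) / (((Finset.univ \ K).card : ℝ))

lemma mem_KminF_iff (n : ℕ) (S : Finset (Fin n)) :
    S ∈ KminF n ↔ S = ∅ ∨ S = Finset.univ ∨ ∃ i, S = {i} := by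
  simp [KminF, eq_comm]

lemma empty_mem_KminF (n : ℕ) : (∅ : Finset (Fin n)) ∈ KminF n := by
  simp [mem_KminF_iff]

lemma univ_mem_KminF (n : ℕ) : (Finset.univ : Finset (Fin n)) ∈ KminF n := by
  simp [mem_KminF_iff]

lemma singleton_mem_KminF (n : ℕ) (i : Fin n) : ({i} : Finset (Fin n)) ∈ KminF n := by
  simp [mem_KminF_iff]

lemma three_le_of_not_mem_KminF {n : ℕ} {S : Finset (Fin n)} (hS : S ∉ KminF n)
    (hne : S.Nonempty) : 3 ≤ n := by
  rw [mem_KminF_iff] at hS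
  push_neg at hS
  obtain ⟨h0, h1, h2⟩ := hS
  have hc2 : 2 ≤ S.card := by
    rcases Nat.lt_or_ge S.card 2 with h | h
    · interval_cases h' : S.card
      · exact absurd (Finset.card_eq_zero.mp h') (Finset.nonempty_iff_ne_empty.mp h0)
      · obtain ⟨a, ha⟩ := Finset.card_eq_one.mp h'
        exact absurd ha (h2 a)
    · exact h
  have hlt : S.card < n := by
    have := Finset.card_lt_card (lt_of_le_of_ne (Finset.subset_univ S)
      (by simpa using h1))
    simpa using this
  omega

lemma sum_v_eq (n : ℕ) (v : Finset (Fin n) → ℝ) :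
    ∑ i : Fin n, v {i} = v Finset.univ - totalExcess n v := by
  simp [totalExcess]

/-- Value of `extGame` outside `K_min`. -/
lemma extGame_not_mem (n : ℕ) (v : Finset (Fin n) → ℝ) (i : Fin n)
    {S : Finset (Fin n)} (hS : S ∉ KminF n) :
    extGame n v i S = v Finset.univ - ∑ j ∈ Finset.univ \ S, v {j}
      - (if i ∈ S then 0 else totalExcess n v) := by
  by_cases hi : i ∈ S <;> simp [extGame, hS, hi]

/-- The upper vector of the extreme game `v^i`. -/
lemma bvec_extGame (n : ℕ) (v : Finset (Fin n) → ℝ) (hv : v ∅ = 0) (i j : Fin n) :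
    bvec n (extGame n v i) j
      = v {j} + (if j = i ∨ n ≤ 2 then totalExcess n v else 0) := by
  have huniv : extGame n v i Finset.univ = v Finset.univ := by
    simp [extGame, univ_mem_KminF]
  rw [bvec, huniv]
  by_cases h : (Finset.univ \ {j} : Finset (Fin n)) ∈ KminF n
  · rcases (mem_KminF_iff n _).mp h with h0 | h1 | ⟨k, hk⟩
    · -- n = 1 : univ = {j}
      have huj : (Finset.univ : Finset (Fin n)) = {j} := by
        have := Finset.sdiff_eq_empty_iff_subset.mp h0
        exact le_antisymm this (by simp)
      have hji : j = i := by
        have : i ∈ ({j} : Finset (Fin n)) := huj ▸ Finset.mem_univ i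
        simpa [eq_comm] using this
      have hsum : ∑ l : Fin n, v {l} = v {j} := by
        rw [huj]; simp
      have hval : extGame n v i (Finset.univ \ {j}) = 0 := by
        simp only [extGame, h0]
        rw [if_pos (empty_mem_KminF n), hv]
      rw [hval, if_pos (Or.inl hji), totalExcess, hsum]
      ring
    · exact absurd (h1 ▸ Finset.mem_univ j) (by simp)
    · -- n = 2 : univ \ {j} = {k}
      have hn2 : n = 2 := by
        have := congrArg Finset.card hk
        simp [Finset.card_sdiff_of_subset (by simp : ({j} : Finset (Fin n)) ⊆ Finset.univ)] at this
        omega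
      have hjk : j ≠ k := by
        intro hjk
        have : k ∈ Finset.univ \ ({j} : Finset (Fin n)) := hk ▸ Finset.mem_singleton_self k
        simp [hjk] at this
      have hsum : ∑ l : Fin n, v {l} = v {j} + v {k} := by
        have : (Finset.univ : Finset (Fin n)) = insert j {k} := by
          rw [← hk, Finset.insert_eq, Finset.union_comm]
          simp [Finset.sdiff_union_of_subset]
        rw [this, Finset.sum_insert (by simp [hjk])]
        simp
      have hval : extGame n v i (Finset.univ \ {j}) = v {k} := by
        simp only [extGame, hk]
        rw [if_pos (singleton_mem_KminF n k)]
      rw [hval, if_pos (Or.inr (by omega : n ≤ 2)), totalExcess, hsum]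
      ring
  · -- univ \ {j} not in Kmin, so n ≥ 3
    have hne : (Finset.univ \ {j} : Finset (Fin n)).Nonempty := by
      rcases Finset.eq_empty_or_nonempty (Finset.univ \ {j} : Finset (Fin n)) with h0 | h0
      · exact absurd (h0 ▸ empty_mem_KminF n) h
      · exact h0
    have hn3 : 3 ≤ n := three_le_of_not_mem_KminF h hne
    have hcompl : Finset.univ \ (Finset.univ \ {j}) = ({j} : Finset (Fin n)) := by
      rw [Finset.sdiff_sdiff_self_left, Finset.univ_inter]
    rw [extGame_not_mem n v i h, hcompl]
    by_cases hij : j = i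
    · rw [if_neg (by simp [hij] : i ∉ Finset.univ \ ({j} : Finset (Fin n))),
        if_pos (Or.inl hij)]
      simp
      ring
    · have hi : i ∈ Finset.univ \ ({j} : Finset (Fin n)) := by
        simp [Ne.symm hij]
      rw [if_pos hi, if_neg (by push_neg; exact ⟨hij, by omega⟩)]
      simp

/-- The extreme game `v^i` is a 1-convex extension. -/
lemma extGame_mem_Cext (n : ℕ) (v : Finset (Fin n) → ℝ) (hv : v ∅ = 0)
    (hΔ : 0 ≤ totalExcess n v) (i : Fin n) :
    extGame n v i ∈ Cext n (KminF n) v := by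
  set Δ := totalExcess n v with hΔdef
  have hb := bvec_extGame n v hv i
  have huniv : extGame n v i Finset.univ = v Finset.univ := by
    simp [extGame, univ_mem_KminF]
  refine ⟨by simp [extGame, empty_mem_KminF, hv], ⟨?_, ?_⟩, fun S hS => by simp [extGame, hS]⟩
  · -- main 1-convexity inequality
    intro S hSne
    rw [huniv]
    have hbsum : ∀ T : Finset (Fin n),
        ∑ j ∈ T, bvec n (extGame n v i) j
          = ∑ j ∈ T, v {j} + Δ * (T.filter (fun j => j = i ∨ n ≤ 2)).card := by
      intro T
      rw [Finset.sum_congr rfl (fun j _ => hb j), Finset.sum_add_distrib]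
      congr 1
      rw [← Finset.sum_filter, Finset.sum_const, nsmul_eq_mul, mul_comm]
    by_cases hS : S ∈ KminF n
    · rcases (mem_KminF_iff n S).mp hS with h0 | h1 | ⟨k, hk⟩
      · exact absurd h0 (Finset.nonempty_iff_ne_empty.mp hSne)
      · simp [h1, huniv]
      · subst hk
        have hval : extGame n v i {k} = v {k} := by simp [extGame, singleton_mem_KminF]
        rw [hval, hbsum]
        have hsum : ∑ j ∈ Finset.univ \ {k}, v {j} = ∑ j : Fin n, v {j} - v {k} := by
          rw [← Finset.erase_eq]
          have := Finset.sum_erase_add Finset.univ (fun j : Fin n => v {j})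
            (Finset.mem_univ k)
          linarith
        have hcard : (((Finset.univ \ {k} : Finset (Fin n))).filter
            (fun j => j = i ∨ n ≤ 2)).card ≤ 1 := by
          by_cases hn : n ≤ 2
          · calc _ ≤ (Finset.univ \ {k} : Finset (Fin n)).card := Finset.card_filter_le _ _
              _ = n - 1 := by
                  simp [Finset.card_sdiff_of_subset (by simp : ({k} : Finset (Fin n)) ⊆ Finset.univ)]
              _ ≤ 1 := by omega
          · calc _ ≤ ({i} : Finset (Fin n)).card := by
                  apply Finset.card_le_card
                  intro x hx
                  simp only [Finset.mem_filter] at hx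
                  rcases hx.2 with h | h
                  · simp [h]
                  · omega
              _ = 1 := by simp
        have : Δ * (((Finset.univ \ {k} : Finset (Fin n))).filter
            (fun j => j = i ∨ n ≤ 2)).card ≤ Δ := by
          calc Δ * _ ≤ Δ * 1 := by
                apply mul_le_mul_of_nonneg_left _ hΔ
                exact_mod_cast hcard
            _ = Δ := mul_one Δ
        have hvuniv : v Finset.univ = ∑ j : Fin n, v {j} + Δ := by
          rw [hΔdef, totalExcess]; ring
        rw [hsum]
        linarith
    · -- S outside Kmin
      have hn3 : 3 ≤ n := three_le_of_not_mem_KminF hS hSne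
      rw [extGame_not_mem n v i hS, hbsum]
      have hfil : ((Finset.univ \ S).filter (fun j => j = i ∨ n ≤ 2))
          = (Finset.univ \ S).filter (fun j => j = i) := by
        apply Finset.filter_congr
        intro x _
        simp only [eq_iff_iff, or_iff_left_iff_imp]
        omega
      rw [hfil]
      have : ((Finset.univ \ S).filter (fun j => j = i)).card
          = if i ∈ S then 0 else 1 := by
        by_cases hi : i ∈ S
        · simp [hi, Finset.filter_eq', Finset.mem_sdiff]
        · simp [hi, Finset.filter_eq', Finset.mem_sdiff]
      rw [this]
      by_cases hi : i ∈ S <;> simp [hi] <;> linarith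
  · -- ∑ b ≥ v(N)
    rw [huniv]
    have : Δ ≤ ∑ j : Fin n, (if j = i ∨ n ≤ 2 then Δ else 0) := by
      have hterm : (if i = i ∨ n ≤ 2 then Δ else 0) = Δ := by simp
      calc Δ = (if i = i ∨ n ≤ 2 then Δ else 0) := hterm.symm
        _ ≤ _ := Finset.single_le_sum (f := fun j : Fin n => if j = i ∨ n ≤ 2 then Δ else 0)
          (fun j _ => by split_ifs <;> simp [hΔ]) (Finset.mem_univ i)
    have hvuniv : v Finset.univ = ∑ j : Fin n, v {j} + Δ := by
      rw [hΔdef, totalExcess]; ring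
    calc v Finset.univ = ∑ j : Fin n, v {j} + Δ := hvuniv
      _ ≤ ∑ j : Fin n, v {j} + ∑ j : Fin n, (if j = i ∨ n ≤ 2 then Δ else 0) := by linarith
      _ = ∑ j : Fin n, bvec n (extGame n v i) j := by
          rw [← Finset.sum_add_distrib]
          exact Finset.sum_congr rfl (fun j _ => (hb j).symm)

/-- the game `v̄` is the upper game of the set of 1-convex
extensions of a minimal incomplete game with `Δ ≥ 0`. -/
theorem stmt_1 (n : ℕ) (v : Finset (Fin n) → ℝ) (hv : v ∅ = 0)
    (hΔ : 0 ≤ totalExcess n v) :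
    (∀ w ∈ Cext n (KminF n) v, ∀ S : Finset (Fin n), w S ≤ upperGameMin n v S) ∧
    (∀ S : Finset (Fin n), ∃ w ∈ Cext n (KminF n) v, w S = upperGameMin n v S) := by
  constructor
  · -- every 1-convex extension is dominated by the upper game
    rintro w ⟨hw0, ⟨hc1, hc2⟩, hK⟩ S
    rw [upperGameMin]
    by_cases hS : S ∈ KminF n
    · rw [if_pos hS]
      exact le_of_eq (hK S hS)
    · rw [if_neg hS]
      have hSne : S.Nonempty := by
        rcases Finset.eq_empty_or_nonempty S with h | h
        · exact absurd (h ▸ empty_mem_KminF n) hS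
        · exact h
      have huniv : w Finset.univ = v Finset.univ := hK _ (univ_mem_KminF n)
      -- v {j} ≤ b^w_j for each j
      have hbv : ∀ j : Fin n, v {j} ≤ bvec n w j := by
        intro j
        have h1 := hc1 {j} (by simp)
        have hsum : ∑ l ∈ Finset.univ \ {j}, bvec n w l
            = ∑ l : Fin n, bvec n w l - bvec n w j := by
          rw [← Finset.erase_eq]
          have := Finset.sum_erase_add Finset.univ (fun l : Fin n => bvec n w l)
            (Finset.mem_univ j)
          linarith
        have hwj : w {j} = v {j} := hK _ (singleton_mem_KminF n j)
        rw [hwj, hsum] at h1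
        linarith
      have := hc1 S hSne
      have hle : ∑ j ∈ Finset.univ \ S, v {j} ≤ ∑ j ∈ Finset.univ \ S, bvec n w j :=
        Finset.sum_le_sum (fun j _ => hbv j)
      rw [huniv] at this
      linarith
  · -- the upper game value is attained
    intro S
    by_cases hS : S ∈ KminF n
    · rcases Nat.eq_zero_or_pos n with hn | hn
      · -- n = 0 : v itself is a 1-convex extension
        refine ⟨v, ⟨hv, ⟨?_, ?_⟩, fun _ _ => rfl⟩, by rw [upperGameMin, if_pos hS]⟩
        · intro T hT
          subst hn
          exact absurd (Finset.eq_empty_of_isEmpty T) (Finset.nonempty_iff_ne_empty.mp hT)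
        · subst hn
          have : (Finset.univ : Finset (Fin 0)) = ∅ := Finset.eq_empty_of_isEmpty _
          simp [this, hv]
      · obtain ⟨i⟩ : Nonempty (Fin n) := ⟨⟨0, hn⟩⟩
        exact ⟨extGame n v i, extGame_mem_Cext n v hv hΔ i,
          by rw [upperGameMin, if_pos hS]; simp [extGame, hS]⟩
    · have hSne : S.Nonempty := by
        rcases Finset.eq_empty_or_nonempty S with h | h
        · exact absurd (h ▸ empty_mem_KminF n) hS
        · exact h
      obtain ⟨i, hi⟩ := hSne
      refine ⟨extGame n v i, extGame_mem_Cext n v hv hΔ i, ?_⟩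
      rw [upperGameMin, if_neg hS]
      simp [extGame, hS, hi]
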